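/- Let W = {(σ_k)_{k≥1} ∈ {0,1}^ω : for every n ≥ 1 there exists k ≥ 0 with σ_{k+1} = σ_{k+2} = ⋯ = σ_{k+n} = 0} (the runs in which the number of consecutive 0's is unbounded). In the Banach–Mazur game (G_{0,1}, 0, W), Player 0 has a move-counting winning strategy (playing n consecutive 0's at the n-th move), but Player 0 has no positional winning strategy and no bounded winning strategy. -/

import Mathlib

open MeasureTheory
open scoped ENNReal NNReal

namespace BMGame

variable {V : Type*}

/-- The prefix of length `n` of the infinite sequence `ρ`. -/
def pref (ρ : ℕ → V) (n : ℕ) : List V := (List.range n).map ρ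

/-- `ρ` is an infinite path of the graph `E` starting at `v₀`. -/
def IsPlay (E : V → V → Prop) (v₀ : V) (ρ : ℕ → V) : Prop :=
  ρ 0 = v₀ ∧ ∀ n, E (ρ n) (ρ (n + 1))

/-- `π` is a nonempty finite path of the graph `E` starting at `v₀` (a position of the game). -/
def IsPos (E : V → V → Prop) (v₀ : V) (π : List V) : Prop :=
  π.head? = some v₀ ∧ π.Chain' E

/-- A strategy for player 0 assigns to each position the (nonempty) block of vertices
appended by player 0's move; `(π ++ f π).Chain' E` says that this block is a path
starting at the last vertex of `π`. -/
def IsStrategy (E : V → V → Prop) (v₀ : V) (f : List V → List V) : Prop :=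
  ∀ π, IsPos E v₀ π → f π ≠ [] ∧ (π ++ f π).Chain' E

/-- The play `ρ` is consistent with the strategy `f`: there are cut points
`c 0, c 1, …` (the lengths of the prefixes built after each move of player 1) such that
after each such prefix player 0 plays according to `f`, and player 1 then appends a
nonempty block. -/
def ConsGen (f : List V → List V) (ρ : ℕ → V) : Prop :=
  ∃ c : ℕ → ℕ, 1 ≤ c 0 ∧ ∀ i,
    pref ρ (c i + (f (pref ρ (c i))).length) = pref ρ (c i) ++ f (pref ρ (c i)) ∧
    c i + (f (pref ρ (c i))).length < c (i + 1)

/-- `f` is a winning strategy for player 0 in the Banach–Mazur game `(E, v₀, W)`. -/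
def WinningStrategy (E : V → V → Prop) (v₀ : V) (W : Set (ℕ → V))
    (f : List V → List V) : Prop :=
  IsStrategy E v₀ f ∧ ∀ ρ, IsPlay E v₀ ρ → ConsGen f ρ → ρ ∈ W

/-- The strategy `f` is `b`-bounded: each of its moves has length at most `b`. -/
def BoundedBy (E : V → V → Prop) (v₀ : V) (b : ℕ) (f : List V → List V) : Prop :=
  ∀ π, IsPos E v₀ π → (f π).length ≤ b

/-- A positional strategy assigns to each vertex the nonempty block appended. -/
def IsPositional (E : V → V → Prop) (f : V → List V) : Prop :=
  ∀ v, f v ≠ [] ∧ (v :: f v).Chain' E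

/-- Consistency with a positional strategy: after each prefix chosen by player 1,
player 0 plays `f` of the current (last) vertex. -/
def ConsPositional (f : V → List V) (ρ : ℕ → V) : Prop :=
  ∃ c : ℕ → ℕ, 1 ≤ c 0 ∧ ∀ i,
    pref ρ (c i + (f (ρ (c i - 1))).length) = pref ρ (c i) ++ f (ρ (c i - 1)) ∧
    c i + (f (ρ (c i - 1))).length < c (i + 1)

def PositionalWinning (E : V → V → Prop) (v₀ : V) (W : Set (ℕ → V)) (f : V → List V) : Prop :=
  IsPositional E f ∧ ∀ ρ, IsPlay E v₀ ρ → ConsPositional f ρ → ρ ∈ W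

/-- Structural requirement shared by move-counting and length-counting strategies:
for `n ≥ 1`, `h v n` is a nonempty block forming a path from `v`. -/
def IsCountingStrategy (E : V → V → Prop) (h : V → ℕ → List V) : Prop :=
  ∀ v n, 1 ≤ n → h v n ≠ [] ∧ (v :: h v n).Chain' E

/-- Consistency with a move-counting strategy: at its `i`-th move (`i ≥ 1`) player 0 plays
`h (current vertex) i`. -/
def ConsMoveCounting (h : V → ℕ → List V) (ρ : ℕ → V) : Prop :=
  ∃ c : ℕ → ℕ, 1 ≤ c 0 ∧ ∀ i,
    pref ρ (c i + (h (ρ (c i - 1)) (i + 1)).length) = pref ρ (c i) ++ h (ρ (c i - 1)) (i + 1) ∧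
    c i + (h (ρ (c i - 1)) (i + 1)).length < c (i + 1)

def MoveCountingWinning (E : V → V → Prop) (v₀ : V) (W : Set (ℕ → V))
    (h : V → ℕ → List V) : Prop :=
  IsCountingStrategy E h ∧ ∀ ρ, IsPlay E v₀ ρ → ConsMoveCounting h ρ → ρ ∈ W

/-- Consistency with a length-counting strategy: after a prefix of length `c i`
player 0 plays `h (current vertex) (c i)`. -/
def ConsLengthCounting (h : V → ℕ → List V) (ρ : ℕ → V) : Prop :=
  ∃ c : ℕ → ℕ, 1 ≤ c 0 ∧ ∀ i,
    pref ρ (c i + (h (ρ (c i - 1)) (c i)).length) = pref ρ (c i) ++ h (ρ (c i - 1)) (c i) ∧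
    c i + (h (ρ (c i - 1)) (c i)).length < c (i + 1)

def LengthCountingWinning (E : V → V → Prop) (v₀ : V) (W : Set (ℕ → V))
    (h : V → ℕ → List V) : Prop :=
  IsCountingStrategy E h ∧ ∀ ρ, IsPlay E v₀ ρ → ConsLengthCounting h ρ → ρ ∈ W

/-- The segment `ρ a, ρ (a+1), …, ρ (b-1)` of an infinite sequence. -/
def seg (ρ : ℕ → V) (a b : ℕ) : List V := (List.range (b - a)).map fun j => ρ (a + j)

/-- A last-move strategy is defined on all nonempty finite paths of the graph. -/
def IsLastMove (E : V → V → Prop) (g : List V → List V) : Prop :=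
  ∀ π, π ≠ [] → π.Chain' E → g π ≠ [] ∧ (π ++ g π).Chain' E

/-- Consistency with the last-move strategy `g`: the play decomposes as
`π₁ g(π₁) π₂ g(π₂) ⋯` where the `πᵢ` are the (nonempty) moves of player 1. -/
def ConsLastMove (g : List V → List V) (ρ : ℕ → V) : Prop :=
  ∃ s e : ℕ → ℕ, s 0 = 0 ∧ (∀ i, s i < e i) ∧ ∀ i,
    seg ρ (e i) (e i + (g (seg ρ (s i) (e i))).length) = g (seg ρ (s i) (e i)) ∧
    s (i + 1) = e i + (g (seg ρ (s i) (e i))).length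

def LastMoveWinning (E : V → V → Prop) (v₀ : V) (W : Set (ℕ → V)) (g : List V → List V) : Prop :=
  IsLastMove E g ∧ ∀ ρ, IsPlay E v₀ ρ → ConsLastMove g ρ → ρ ∈ W

/-- The cylinder generated by the finite word `π`. -/
def Cyl (π : List V) : Set (ℕ → V) := {ρ | pref ρ π.length = π}

/-- One-step transition probabilities obtained from the weights `w`. -/
noncomputable def transP [Fintype V] (E : V → V → Prop) (w : V → V → ℝ≥0) (u v : V) : ℝ≥0∞ := by
  classical
  exact if E u v then
    (w u v : ℝ≥0∞) / ∑ x ∈ Finset.univ.filter (fun x => E u x), (w u x : ℝ≥0∞)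
  else 0

/-- The probability of the cylinder generated by a finite word: the product of the
one-step transition probabilities along it. -/
noncomputable def pathP [Fintype V] (E : V → V → Prop) (w : V → V → ℝ≥0) (π : List V) : ℝ≥0∞ :=
  ((π.zip π.tail).map fun q => transP E w q.1 q.2).prod

/-- `P` is the reasonable probability measure associated with the weights `w`. -/
def IsReasonable [Fintype V] [MeasurableSpace (ℕ → V)] (E : V → V → Prop) (v₀ : V)
    (w : V → V → ℝ≥0) (P : Measure (ℕ → V)) : Prop :=
  IsProbabilityMeasure P ∧ ∀ π : List V, π.head? = some v₀ → P (Cyl π) = pathP E w π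

/-- `Ps` is a legal move of player 0 in the generalised game `G_α` at position `π`: a
finite nonempty set of nonempty finite paths from the last vertex of `π` whose union of
cylinders has conditional probability at least `α` given `Cyl π`. -/
def LegalProposal [MeasurableSpace (ℕ → V)] (E : V → V → Prop) (P : Measure (ℕ → V)) (α : ℝ)
    (π : List V) (Ps : Finset (List V)) : Prop :=
  Ps.Nonempty ∧ (∀ τ ∈ Ps, τ ≠ [] ∧ (π ++ τ).Chain' E) ∧
    ENNReal.ofReal α ≤ P (⋃ τ ∈ Ps, Cyl (π ++ τ)) / P (Cyl π)

/-- An α-strategy for player 0. -/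
def IsAlphaStrategy [MeasurableSpace (ℕ → V)] (E : V → V → Prop) (v₀ : V) (P : Measure (ℕ → V))
    (α : ℝ) (f : List V → Finset (List V)) : Prop :=
  ∀ π, IsPos E v₀ π → LegalProposal E P α π (f π)

/-- Consistency with an α-strategy: at each stage, player 1 picks some element of the
set proposed by player 0 and appends a nonempty block after it. -/
def ConsAlpha (f : List V → Finset (List V)) (ρ : ℕ → V) : Prop :=
  ∃ c : ℕ → ℕ, 1 ≤ c 0 ∧ ∀ i, ∃ τ ∈ f (pref ρ (c i)),
    pref ρ (c i + τ.length) = pref ρ (c i) ++ τ ∧ c i + τ.length < c (i + 1)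

def AlphaWinning [MeasurableSpace (ℕ → V)] (E : V → V → Prop) (v₀ : V) (P : Measure (ℕ → V))
    (α : ℝ) (W : Set (ℕ → V)) (f : List V → Finset (List V)) : Prop :=
  IsAlphaStrategy E v₀ P α f ∧ ∀ ρ, IsPlay E v₀ ρ → ConsAlpha f ρ → ρ ∈ W

/-- A strategy for player 1 in the generalised game `G_α` consists of an initial path and,
for each position together with a legal proposal of player 0, the selected element of the
proposal and the next (nonempty) block played by player 1. -/
def IsP1Strategy [MeasurableSpace (ℕ → V)] (E : V → V → Prop) (v₀ : V) (P : Measure (ℕ → V))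
    (α : ℝ) (init : List V) (g : List V → Finset (List V) → List V × List V) : Prop :=
  IsPos E v₀ init ∧
    ∀ π Ps, IsPos E v₀ π → LegalProposal E P α π Ps →
      (g π Ps).1 ∈ Ps ∧ (g π Ps).2 ≠ [] ∧ (π ++ ((g π Ps).1 ++ (g π Ps).2)).Chain' E

/-- Consistency of a play with player 1's strategy `(init, g)`:
there is a sequence of legal proposals of player 0 generating the play. -/
def ConsP1 [MeasurableSpace (ℕ → V)] (E : V → V → Prop) (P : Measure (ℕ → V)) (α : ℝ)
    (init : List V) (g : List V → Finset (List V) → List V × List V) (ρ : ℕ → V) : Prop :=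
  ∃ (Ps : ℕ → Finset (List V)) (p : ℕ → List V), p 0 = init ∧
    (∀ n, pref ρ (p n).length = p n) ∧
    ∀ n, LegalProposal E P α (p n) (Ps n) ∧
      p (n + 1) = p n ++ ((g (p n) (Ps n)).1 ++ (g (p n) (Ps n)).2)

def P1Winning [MeasurableSpace (ℕ → V)] (E : V → V → Prop) (v₀ : V) (P : Measure (ℕ → V))
    (α : ℝ) (W : Set (ℕ → V)) (init : List V)
    (g : List V → Finset (List V) → List V × List V) : Prop :=
  IsP1Strategy E v₀ P α init g ∧ ∀ ρ, IsPlay E v₀ ρ → ConsP1 E P α init g ρ → ρ ∉ W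

/-- A union of cylinders, i.e. an open subset of the space of sequences. -/
def IsCylOpen (U : Set (ℕ → V)) : Prop :=
  ∃ S : Set (List V), U = ⋃ π ∈ S, Cyl π

/-- `W` is a countable intersection of open subsets of the space `Paths (G, v₀)`. -/
def IsCountableInterOfOpens (E : V → V → Prop) (v₀ : V) (W : Set (ℕ → V)) : Prop :=
  ∃ U : ℕ → Set (ℕ → V), (∀ n, IsCylOpen (U n)) ∧
    W = {ρ | IsPlay E v₀ ρ} ∩ ⋂ n, U n

/-- For every `n`, the concatenation of the blocks `u 0, …, u (n-1)` is a prefix of `ρ`. -/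
def AgreesWithBlocks (ρ : ℕ → V) (u : ℕ → List V) : Prop :=
  ∀ n, pref ρ (((List.range n).map u).flatten).length = ((List.range n).map u).flatten

end BMGame

open BMGame

/-- The complete directed graph on `{0,1}` (all edges, including self-loops). -/
def E2 : Fin 2 → Fin 2 → Prop := fun _ _ => True

/-- The set of sequences over `{0,1}` in which the number of consecutive `0`'s is
unbounded: for every `n ≥ 1` there is `k ≥ 0` with `σ_{k+1} = ⋯ = σ_{k+n} = 0`
(sequences are `0`-indexed, `σ_i = ρ (i - 1)`). -/
def W9 : Set (ℕ → Fin 2) :=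
  {ρ | ∀ n : ℕ, 1 ≤ n → ∃ k : ℕ, ∀ i, i < n → ρ (k + i) = 0}


section Aux

lemma chainE2 (l : List (Fin 2)) : l.Chain' E2 := by
  induction l with
  | nil => exact List.isChain_nil
  | cons a t ih =>
    cases t with
    | nil => exact List.isChain_singleton a
    | cons b s => exact List.isChain_cons_cons.2 ⟨trivial, ih⟩

lemma pref_length (ρ : ℕ → Fin 2) (n : ℕ) : (pref ρ n).length = n := by simp [pref]

lemma pref_getElem (ρ : ℕ → Fin 2) {n k : ℕ} (h : k < (pref ρ n).length) :
    (pref ρ n)[k] = ρ k := by simp [pref]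

/-- Player 1's counter-construction: start with `[0]`, then alternately let
player 0 extend by `t (current history)` and append a `1`. -/
def qSeq (t : List (Fin 2) → List (Fin 2)) : ℕ → List (Fin 2)
  | 0 => [0]
  | (i+1) => qSeq t i ++ (t (qSeq t i) ++ [1])

lemma qSeq_lt (t : List (Fin 2) → List (Fin 2)) : ∀ i, i < (qSeq t i).length := by
  intro i
  induction i with
  | zero => simp [qSeq]
  | succ i ih => simp only [qSeq, List.length_append, List.length_singleton]; omega

lemma qSeq_prefix (t : List (Fin 2) → List (Fin 2)) {i j : ℕ} (h : i ≤ j) :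
    qSeq t i <+: qSeq t j := by
  induction j with
  | zero => simp_all
  | succ j ih =>
    rcases Nat.lt_or_ge i (j+1) with h' | h'
    · exact (ih (by omega)).trans (List.prefix_append _ _)
    · have : i = j + 1 := by omega
      subst this; rfl

def rhoOf (t : List (Fin 2) → List (Fin 2)) : ℕ → Fin 2 :=
  fun n => (qSeq t (n+1)).getD n 0

lemma rho_eq (t : List (Fin 2) → List (Fin 2)) {i n : ℕ} (h : n < (qSeq t i).length) :
    rhoOf t n = (qSeq t i)[n] := by
  have hn : n < (qSeq t (n+1)).length := Nat.lt_trans (Nat.lt_succ_self n) (qSeq_lt t (n+1))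
  unfold rhoOf
  rw [List.getD_eq_getElem _ _ hn]
  rcases Nat.le_total (n+1) i with h' | h'
  · exact (qSeq_prefix t h').getElem hn
  · exact ((qSeq_prefix t h').getElem h).symm

lemma pref_eq_of_prefix (t : List (Fin 2) → List (Fin 2)) {l : List (Fin 2)} {i : ℕ}
    (h : l <+: qSeq t i) : pref (rhoOf t) l.length = l := by
  apply List.ext_getElem
  · exact pref_length _ _
  · intro k h1 h2
    rw [pref_getElem]
    rw [rho_eq t (show k < (qSeq t i).length from lt_of_lt_of_le h2 h.length_le)]
    exact (h.getElem h2).symm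

lemma qSeq_head (t : List (Fin 2) → List (Fin 2)) (i : ℕ) : (qSeq t i).head? = some 0 := by
  induction i with
  | zero => rfl
  | succ i ih => simp [qSeq, ih]

lemma qSeq_pos (t : List (Fin 2) → List (Fin 2)) (i : ℕ) : IsPos E2 0 (qSeq t i) :=
  ⟨qSeq_head t i, chainE2 _⟩

lemma rho_zero (t : List (Fin 2) → List (Fin 2)) : rhoOf t 0 = 0 := by
  have h0 : (0:ℕ) < (qSeq t 0).length := by simp [qSeq]
  rw [rho_eq t h0]; rfl

lemma rho_one (t : List (Fin 2) → List (Fin 2)) (i : ℕ) :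
    rhoOf t ((qSeq t i).length + (t (qSeq t i)).length) = 1 := by
  have hlen : (qSeq t i).length + (t (qSeq t i)).length < (qSeq t (i+1)).length := by
    simp only [qSeq, List.length_append, List.length_singleton]; omega
  rw [rho_eq t hlen]
  have heq : qSeq t (i+1) = (qSeq t i ++ t (qSeq t i)) ++ [1] := by simp [qSeq]
  rw [List.getElem_of_eq heq, List.getElem_append_right (by simp)]
  simp

/-- If all of player 0's blocks have length in `[1, B]`, the resulting play is not in `W9`. -/
lemma rho_not_W9 (t : List (Fin 2) → List (Fin 2)) (B : ℕ)
    (h1 : ∀ i, 1 ≤ (t (qSeq t i)).length) (h2 : ∀ i, (t (qSeq t i)).length ≤ B) :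
    rhoOf t ∉ W9 := by
  set d : ℕ → ℕ := fun i => (qSeq t i).length + (t (qSeq t i)).length with hd
  have hd0 : d 0 ≤ B + 1 := by
    have := h2 0
    have e : (qSeq t 0).length = 1 := rfl
    simp only [hd]
    omega
  have hdsucc : ∀ i, d i + 2 ≤ d (i+1) ∧ d (i+1) ≤ d i + B + 1 := by
    intro i
    have e : (qSeq t (i+1)).length = d i + 1 := by
      simp only [hd, qSeq, List.length_append, List.length_singleton]; omega
    constructor
    · have := h1 (i+1); simp only [hd, e] at *; omega
    · have := h2 (i+1); simp only [hd, e] at *; omega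
  have key : ∀ k, ∃ j, k ≤ d j ∧ d j ≤ k + B + 1 := by
    intro k
    induction k with
    | zero => exact ⟨0, Nat.zero_le _, by omega⟩
    | succ k ih =>
      obtain ⟨j, hj1, hj2⟩ := ih
      rcases Nat.lt_or_ge k (d j) with h' | h'
      · exact ⟨j, h', by omega⟩
      · obtain ⟨ha, hb⟩ := hdsucc j
        exact ⟨j+1, by omega, by omega⟩
  intro hW
  obtain ⟨k, hk⟩ := hW (B + 2) (by omega)
  obtain ⟨j, hj1, hj2⟩ := key k
  have hval := hk (d j - k) (by omega)
  rw [show k + (d j - k) = d j by omega] at hval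
  rw [rho_one t j] at hval
  exact absurd hval (by decide)

end Aux

/-- In the game `(G_{0,1}, 0, W9)`, Player 0 has a move-counting winning strategy,
but no positional winning strategy and no bounded winning strategy. -/
theorem stmt9 :
    (∃ h : Fin 2 → ℕ → List (Fin 2), MoveCountingWinning E2 0 W9 h) ∧
    (¬ ∃ f : Fin 2 → List (Fin 2), PositionalWinning E2 0 W9 f) ∧
    (¬ ∃ (f : List (Fin 2) → List (Fin 2)) (b : ℕ), 1 ≤ b ∧
        WinningStrategy E2 0 W9 f ∧ BoundedBy E2 0 b f) := by
  refine ⟨⟨fun _ n => List.replicate n 0, ?_, ?_⟩, ?_, ?_⟩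
  · -- IsCountingStrategy
    intro v n hn
    exact ⟨List.ne_nil_of_length_pos (by simp; omega), chainE2 _⟩
  · -- move-counting strategy wins
    rintro ρ hplay ⟨c, hc0, hc⟩ n hn
    have hcc := (hc (n - 1)).1
    rw [show n - 1 + 1 = n by omega] at hcc
    simp only [List.length_replicate] at hcc
    refine ⟨c (n - 1), fun j hj => ?_⟩
    have hlen : c (n - 1) + j < (pref ρ (c (n - 1) + n)).length := by
      rw [pref_length]; omega
    have h1 := List.getElem_of_eq hcc hlen
    rw [pref_getElem] at h1
    rw [List.getElem_append_right (by rw [pref_length]; omega)] at h1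
    simpa using h1
  · -- no positional winning strategy
    rintro ⟨f, hpos, hwin⟩
    set t : List (Fin 2) → List (Fin 2) := fun l => f (l.getD (l.length - 1) 0) with ht
    set ρ := rhoOf t with hρ
    set B := max (f 0).length (f 1).length with hB
    have hfB : ∀ v : Fin 2, 1 ≤ (f v).length ∧ (f v).length ≤ B := by
      intro v
      refine ⟨List.length_pos_iff.2 (hpos v).1, ?_⟩
      fin_cases v
      · exact le_max_left _ _
      · exact le_max_right _ _
    have h1 : ∀ i, 1 ≤ (t (qSeq t i)).length := fun i => (hfB _).1
    have h2 : ∀ i, (t (qSeq t i)).length ≤ B := fun i => (hfB _).2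
    refine rho_not_W9 t B h1 h2 (hwin ρ ⟨rho_zero t, fun n => trivial⟩ ?_)
    refine ⟨fun i => (qSeq t i).length, qSeq_lt t 0, fun i => ?_⟩
    have hipos : 1 ≤ (qSeq t i).length := by have := qSeq_lt t i; omega
    have hlast : ρ ((qSeq t i).length - 1) = (qSeq t i).getD ((qSeq t i).length - 1) 0 := by
      rw [hρ, rho_eq t (show (qSeq t i).length - 1 < (qSeq t i).length by omega)]
      rw [List.getD_eq_getElem _ _ (by omega)]
    have hft : f (ρ ((qSeq t i).length - 1)) = t (qSeq t i) := by rw [hlast]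
    have hpre : qSeq t i ++ t (qSeq t i) <+: qSeq t (i+1) :=
      ⟨[1], by simp [qSeq]⟩
    have hq1 := pref_eq_of_prefix t hpre
    rw [List.length_append] at hq1
    have hq0 : pref ρ (qSeq t i).length = qSeq t i :=
      pref_eq_of_prefix t (List.prefix_refl _)
    refine ⟨?_, ?_⟩
    · rw [hft, hq0]; exact hq1
    · show (qSeq t i).length + (f (ρ ((qSeq t i).length - 1))).length < (qSeq t (i+1)).length
      rw [hft]
      have : (qSeq t (i+1)).length = (qSeq t i).length + (t (qSeq t i)).length + 1 := by
        simp only [qSeq, List.length_append, List.length_singleton]; omega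
      omega
  · -- no bounded winning strategy
    rintro ⟨f, b, hb, ⟨hstrat, hwin⟩, hbdd⟩
    set ρ := rhoOf f with hρ
    have h1 : ∀ i, 1 ≤ (f (qSeq f i)).length := fun i =>
      List.length_pos_iff.2 (hstrat _ (qSeq_pos f i)).1
    have h2 : ∀ i, (f (qSeq f i)).length ≤ b := fun i => hbdd _ (qSeq_pos f i)
    refine rho_not_W9 f b h1 h2 (hwin ρ ⟨rho_zero f, fun n => trivial⟩ ?_)
    refine ⟨fun i => (qSeq f i).length, qSeq_lt f 0, fun i => ?_⟩
    have hq0 : pref ρ (qSeq f i).length = qSeq f i :=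
      pref_eq_of_prefix f (List.prefix_refl _)
    have hpre : qSeq f i ++ f (qSeq f i) <+: qSeq f (i+1) :=
      ⟨[1], by simp [qSeq]⟩
    have hq1 := pref_eq_of_prefix f hpre
    rw [List.length_append] at hq1
    refine ⟨?_, ?_⟩
    · rw [hq0]; exact hq1
    · show (qSeq f i).length + (f (pref ρ (qSeq f i).length)).length < (qSeq f (i+1)).length
      rw [hq0]
      have : (qSeq f (i+1)).length = (qSeq f i).length + (f (qSeq f i)).length + 1 := by
        simp only [qSeq, List.length_append, List.length_singleton]; omega
      omega
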